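/- If the blanketing space V_R = { s0 + Σ_i (a i) • v i | a : Fin n → ℚ } and the solution space V_Ψ = { x : Fin m → ℚ | x j = β } are disjoint, then no reachable state of the VAS satisfies Ψ, i.e. there is no state s reachable from s0 with s j = β. -/
import Mathlib


/-- A trace `l` is valid from `s0` if every partial sum stays componentwise
nonnegative. -/
def ValidTrace {n m : ℕ} (v : Fin n → (Fin m → ℤ)) (s0 : Fin m → ℤ)
    (l : List (Fin n)) : Prop :=
  ∀ t ≤ l.length, ∀ j : Fin m, 0 ≤ (s0 + ((l.take t).map v).sum) j

/-- A state `s` is reachable from `s0` if there is a valid trace `l` with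
`s = s0 + ∑_{k ∈ l} v (l.get k)`. -/
def Reachable {n m : ℕ} (v : Fin n → (Fin m → ℤ)) (s0 : Fin m → ℤ)
    (s : Fin m → ℤ) : Prop :=
  ∃ l : List (Fin n), ValidTrace v s0 l ∧ s = s0 + (l.map v).sum

private lemma list_sum_in_span {n m : ℕ} (v : Fin n → (Fin m → ℤ))
    (l : List (Fin n)) :
    ∃ a : Fin n → ℚ,
      (fun k => (((l.map v).sum : Fin m → ℤ) k : ℚ)) =
        ∑ i : Fin n, a i • (fun k => (v i k : ℚ)) := by
  induction l with
  | nil =>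
    exact ⟨0, by simp [Finset.sum_eq_zero]; rfl⟩
  | cons x l ih =>
    obtain ⟨a, ha⟩ := ih
    refine ⟨a + Pi.single x 1, ?_⟩
    have : ∑ i : Fin n, ((a + Pi.single x 1 : Fin n → ℚ)) i • (fun k => ((v i k : ℚ))) =
        (∑ i : Fin n, a i • (fun k => ((v i k : ℚ)))) +
          ∑ i : Fin n, (Pi.single x 1 : Fin n → ℚ) i • (fun k => ((v i k : ℚ))) := by
      rw [← Finset.sum_add_distrib]
      exact Finset.sum_congr rfl fun i _ => by simp [add_smul]
    rw [this, ← ha]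
    have hx : ∑ i : Fin n, (Pi.single x 1 : Fin n → ℚ) i • (fun k => ((v i k : ℚ))) =
        (fun k => ((v x k : ℚ))) := by
      rw [Fintype.sum_eq_single x]
      · simp
      · intro i hi; simp [Pi.single_eq_of_ne hi]
    rw [hx]
    funext k
    simp [add_comm]

/-- If the blanketing space `V_R` and the solution space
`V_Ψ = { x | x j = β }` are disjoint, then no reachable state satisfies `Ψ`. -/
theorem disjoint_blanketing_solution_implies_unreachable
    (n m : ℕ) (v : Fin n → (Fin m → ℤ)) (s0 : Fin m → ℤ)
    (hs0 : ∀ j, 0 ≤ s0 j) (j : Fin m) (β : ℤ)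
    (VR : Set (Fin m → ℚ))
    (hVR : VR = { y | ∃ a : Fin n → ℚ,
        y = (fun k => (s0 k : ℚ)) + ∑ i : Fin n, a i • (fun k => (v i k : ℚ)) })
    (VΨ : Set (Fin m → ℚ))
    (hVΨ : VΨ = { x | x j = (β : ℚ) })
    (hdisj : VR ∩ VΨ = ∅) :
    ¬ ∃ s : Fin m → ℤ, Reachable v s0 s ∧ s j = β := by
  rintro ⟨s, ⟨l, _, rfl⟩, hsj⟩
  obtain ⟨a, ha⟩ := list_sum_in_span v l
  have hmem : (fun k => (((s0 + (l.map v).sum) k : ℤ) : ℚ)) ∈ VR ∩ VΨ := by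
    constructor
    · rw [hVR]
      exact ⟨a, by funext k; have := congrFun ha k; simp at this ⊢; rw [this]⟩
    · rw [hVΨ]
      simp only [Set.mem_setOf_eq]
      exact_mod_cast congrArg (fun z : ℤ => (z : ℚ)) hsj
  rw [hdisj] at hmem
  exact hmem
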